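/- Let P be a finite set of points in the Euclidean plane, let p₀, q₀ ∈ sky(P) with x(p₀) < x(q₀), and assume every point p ∈ P satisfies x(p₀) ≤ x(p) ≤ x(q₀). Let L = { p ∈ P : d(p,p₀) ≤ d(p,q₀) } (nonempty, since p₀ ∈ L) and R = { p ∈ P : d(p,q₀) < d(p,p₀) } (nonempty, since q₀ ∈ R). Let p₁ be the point of L with largest x-coordinate, ties broken in favor of larger y-coordinate, and let q₁ be the point of R with largest y-coordinate, ties broken in favor of larger x-coordinate. Then p₁ ∈ sky(P) or q₁ ∈ sky(P). -/

import Mathlib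

abbrev Pt : Type := EuclideanSpace ℝ (Fin 2)

open Classical in
noncomputable def sky (P : Finset Pt) : Finset Pt :=
  P.filter (fun p => ∀ q ∈ P, q ≠ p → q 0 < p 0 ∨ q 1 < p 1)

lemma dist_sq_expand (p a : Pt) :
    dist p a ^ 2 = (p 0 - a 0) ^ 2 + (p 1 - a 1) ^ 2 := by
  rw [EuclideanSpace.dist_eq, Real.sq_sqrt (by positivity)]
  simp [Fin.sum_univ_two, Real.dist_eq, sq_abs]

lemma dist_le_iff' (p a b : Pt) :
    dist p a ≤ dist p b ↔
      (p 0 - a 0) ^ 2 + (p 1 - a 1) ^ 2 ≤ (p 0 - b 0) ^ 2 + (p 1 - b 1) ^ 2 := by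
  rw [← dist_sq_expand, ← dist_sq_expand,
    pow_le_pow_iff_left₀ dist_nonneg dist_nonneg two_ne_zero]

lemma dist_lt_iff' (p a b : Pt) :
    dist p a < dist p b ↔
      (p 0 - a 0) ^ 2 + (p 1 - a 1) ^ 2 < (p 0 - b 0) ^ 2 + (p 1 - b 1) ^ 2 := by
  rw [← dist_sq_expand, ← dist_sq_expand,
    pow_lt_pow_iff_left₀ dist_nonneg dist_nonneg two_ne_zero]

lemma pt_ext {p q : Pt} (h0 : p 0 = q 0) (h1 : p 1 = q 1) : p = q := by
  ext i
  fin_cases i <;> assumption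

theorem stmt16 (P : Finset Pt) (p₀ q₀ : Pt)
    (hp₀ : p₀ ∈ sky P) (hq₀ : q₀ ∈ sky P) (hx : p₀ 0 < q₀ 0)
    (hrange : ∀ p ∈ P, p₀ 0 ≤ p 0 ∧ p 0 ≤ q₀ 0)
    (p₁ : Pt) (hp₁ : p₁ ∈ P ∧ dist p₁ p₀ ≤ dist p₁ q₀)
    (hp₁max : ∀ p ∈ P, dist p p₀ ≤ dist p q₀ →
      p 0 < p₁ 0 ∨ (p 0 = p₁ 0 ∧ p 1 ≤ p₁ 1))
    (q₁ : Pt) (hq₁ : q₁ ∈ P ∧ dist q₁ q₀ < dist q₁ p₀)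
    (hq₁max : ∀ p ∈ P, dist p q₀ < dist p p₀ →
      p 1 < q₁ 1 ∨ (p 1 = q₁ 1 ∧ p 0 ≤ q₁ 0)) :
    p₁ ∈ sky P ∨ q₁ ∈ sky P := by
  by_contra h
  push_neg at h
  obtain ⟨hns, hnq⟩ := h
  simp only [sky, Finset.mem_filter, not_and, not_forall] at hns hnq
  obtain ⟨r, hrP, hrne, hrdom⟩ := hns hp₁.1
  obtain ⟨s, hsP, hsne, hsdom⟩ := hnq hq₁.1
  push_neg at hrdom hsdom
  -- p₀ has strictly maximal y
  simp only [sky, Finset.mem_filter] at hp₀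
  have hq₀y : q₀ 1 < p₀ 1 := by
    have hq₀P : q₀ ∈ P := by
      have := hq₀; simp only [sky, Finset.mem_filter] at this; exact this.1
    rcases hp₀.2 q₀ hq₀P (fun hq => by rw [hq] at hx; exact lt_irrefl _ hx) with h | h
    · exact absurd h (not_lt.mpr hx.le)
    · exact h
  -- r is in R
  have hrR : dist r q₀ < dist r p₀ := by
    by_contra hR
    push_neg at hR
    have hL : dist r p₀ ≤ dist r q₀ := by
      rcases le_or_gt (dist r p₀) (dist r q₀) with h | h
      · exact h
      · exact absurd hR (not_le.mpr h)
    rcases hp₁max r hrP hL with h | ⟨h0, h1⟩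
    · exact absurd hrdom.1 (not_le.mpr h)
    · exact hrne (pt_ext h0 (le_antisymm h1 hrdom.2))
  -- s is in L
  have hsL : dist s p₀ ≤ dist s q₀ := by
    by_contra hL
    push_neg at hL
    rcases hq₁max s hsP hL with h | ⟨h1, h0⟩
    · exact absurd hsdom.2 (not_le.mpr h)
    · exact hsne (pt_ext (le_antisymm h0 hsdom.1) h1)
  -- key coordinate inequalities
  have h1 : p₁ 1 ≤ q₁ 1 := by
    rcases hq₁max r hrP hrR with h | ⟨h1, _⟩
    · exact hrdom.2.trans h.le
    · exact h1 ▸ hrdom.2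
  have h0 : q₁ 0 ≤ p₁ 0 := by
    rcases hp₁max s hsP hsL with h | ⟨h0, _⟩
    · exact hsdom.1.trans h.le
    · exact h0 ▸ hsdom.1
  have hA := (dist_le_iff' p₁ p₀ q₀).mp hp₁.2
  have hB := (dist_lt_iff' q₁ q₀ p₀).mp hq₁.2
  nlinarith [mul_nonneg (sub_nonneg.mpr hx.le) (sub_nonneg.mpr h0),
    mul_nonneg (sub_nonneg.mpr hq₀y.le) (sub_nonneg.mpr h1)]
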